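/- Let M be the p×p averaging matrix (companion matrix with last row all 1/p) and D = I − (1/p)·J where J is the all-ones p×p matrix. Then the set of eigenvalues of O = D·M is {0} ∪ {λ_1, ..., λ_{p-1}}, where λ_1, ..., λ_{p-1} are the roots of R(x) = Σ_{k=0}^{p-1} ((k+1)/p)·x^k; in particular the spectral radius of O is at most (p−1)/p < 1. -/

import Mathlib

open Polynomial Finset

/-- `R(x) = Σ_{k<p} ((k+1)/p)·x^k` over `ℂ`. -/
noncomputable def RpolyC (p : ℕ) : Polynomial ℂ :=
  ∑ k ∈ Finset.range p, C (((k : ℂ) + 1) / p) * X ^ k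

/-- The `p×p` averaging matrix over `ℂ`. -/
noncomputable def MmatC (p : ℕ) : Matrix (Fin p) (Fin p) ℂ :=
  Matrix.of fun i j =>
    if (i : ℕ) + 1 < p then (if (j : ℕ) = (i : ℕ) + 1 then 1 else 0)
    else 1 / p

/-- `D = I - (1/p)·J`, the projection onto the mean-zero hyperplane. -/
noncomputable def DmatC (p : ℕ) : Matrix (Fin p) (Fin p) ℂ :=
  1 - ((p : ℂ))⁻¹ • Matrix.of (fun _ _ => (1 : ℂ))

namespace EigDM

lemma spec_iff {n : ℕ} (A : Matrix (Fin n) (Fin n) ℂ) (l : ℂ) :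
    l ∈ spectrum ℂ A ↔ ∃ v : Fin n → ℂ, v ≠ 0 ∧ A.mulVec v = l • v := by
  rw [spectrum.mem_iff, Matrix.isUnit_iff_isUnit_det, isUnit_iff_ne_zero, not_ne_iff,
    ← Matrix.exists_mulVec_eq_zero_iff]
  apply exists_congr; intro v
  apply and_congr_right; intro _
  rw [Algebra.algebraMap_eq_smul_one, Matrix.sub_mulVec, Matrix.smul_mulVec,
    Matrix.one_mulVec, sub_eq_zero, eq_comm]

lemma DmulVec {p : ℕ} (w : Fin p → ℂ) (i : Fin p) :
    (DmatC p).mulVec w i = w i - (∑ j, w j) / p := by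
  simp only [DmatC, Matrix.sub_mulVec, Matrix.smul_mulVec, Matrix.one_mulVec,
    Pi.sub_apply, Pi.smul_apply, smul_eq_mul, div_eq_inv_mul]
  congr 1
  simp [Matrix.mulVec, dotProduct, Finset.mul_sum]

lemma MmulVec {p : ℕ} (v : Fin p → ℂ) (i : Fin p) (h : (i : ℕ) + 1 < p) :
    (MmatC p).mulVec v i = v ⟨(i : ℕ) + 1, h⟩ := by
  have : ∀ j : Fin p, ((j : ℕ) = (i : ℕ) + 1) = (j = ⟨(i : ℕ) + 1, h⟩) := by
    intro j; simp [Fin.ext_iff]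
  simp [MmatC, Matrix.mulVec, dotProduct, h, this]

lemma MmulVec_last {p : ℕ} (v : Fin p → ℂ) (i : Fin p) (h : ¬ ((i : ℕ) + 1 < p)) :
    (MmatC p).mulVec v i = (∑ j, v j) / p := by
  simp [MmatC, Matrix.mulVec, dotProduct, h, div_eq_inv_mul, Finset.mul_sum]

lemma OmulVec {p : ℕ} (v : Fin p → ℂ) (i : Fin p) :
    (DmatC p * MmatC p).mulVec v i
      = (MmatC p).mulVec v i - (∑ j, (MmatC p).mulVec v j) / p := by
  rw [← Matrix.mulVec_mulVec, DmulVec]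

lemma sumS (p : ℕ) (x : ℂ) :
    (1 - x) * (∑ i ∈ range p, ∑ j ∈ range i, x ^ j) = p - ∑ i ∈ range p, x ^ i := by
  rw [Finset.mul_sum]
  have h : ∀ i ∈ range p, (1 - x) * ∑ j ∈ range i, x ^ j = 1 - x ^ i := by
    intro i _
    have := geom_sum_mul x i
    linear_combination -this
  rw [Finset.sum_congr rfl h, Finset.sum_sub_distrib]
  simp

lemma master (p : ℕ) (x : ℂ) :
    (∑ k ∈ range p, x ^ k) ^ 2
      = x ^ p * (∑ i ∈ range p, ∑ j ∈ range i, x ^ j)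
        + ∑ k ∈ range p, ((k : ℂ) + 1) * x ^ k := by
  induction p with
  | zero => simp
  | succ p ih =>
    have g1 : (1 - x) * (∑ k ∈ range p, x ^ k) = 1 - x ^ p := by
      have := geom_sum_mul x p; linear_combination -this
    have g2 := sumS p x
    rw [Finset.sum_range_succ, Finset.sum_range_succ (f := fun k => ((k : ℂ) + 1) * x ^ k),
      Finset.sum_range_succ (f := fun i => ∑ j ∈ range i, x ^ j)]
    ring_nf
    ring_nf at ih g1 g2
    linear_combination ih + x ^ p * g2 + x ^ p * g1

noncomputable def fseq (l a μ : ℂ) (n : ℕ) : ℂ :=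
  l ^ n * a + μ * ∑ j ∈ range n, l ^ j

lemma fseq_succ (l a μ : ℂ) (n : ℕ) :
    fseq l a μ (n + 1) = l * fseq l a μ n + μ := by
  simp only [fseq, geom_sum_succ]
  ring

lemma fseq_sum (p : ℕ) (l a μ : ℂ) :
    ∑ n ∈ range p, fseq l a μ n
      = a * (∑ k ∈ range p, l ^ k) + μ * (∑ i ∈ range p, ∑ j ∈ range i, l ^ j) := by
  simp only [fseq]
  rw [Finset.sum_add_distrib, ← Finset.mul_sum, ← Finset.sum_mul]
  ring

/-- Backward: a nonzero root of `Σ (k+1) x^k` is an eigenvalue of `O`. -/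
lemma backward {p : ℕ} (hp : 2 ≤ p) (l : ℂ) (hl : l ≠ 0)
    (hroot : ∑ k ∈ range p, ((k : ℂ) + 1) * l ^ k = 0) :
    ∃ v : Fin p → ℂ, v ≠ 0 ∧ (DmatC p * MmatC p).mulVec v = l • v := by
  have hpC : (p : ℂ) ≠ 0 := Nat.cast_ne_zero.2 (by omega)
  set T : ℂ := ∑ k ∈ range p, l ^ k with hT
  set a : ℂ := T
  set μ : ℂ := -l ^ p with hμ
  set v : Fin p → ℂ := fun i => fseq l a μ (i : ℕ) with hv
  have hp1 : p - 1 + 1 = p := by omega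
  have hfp : fseq l a μ p = 0 := by
    simp only [fseq, ← hT]
    rw [hμ]; ring
  have hsum : ∑ j, v j = 0 := by
    rw [hv, Fin.sum_univ_eq_sum_range (fun n => fseq l a μ n) p, fseq_sum]
    have := master p l
    rw [hroot, add_zero] at this
    rw [hμ]
    linear_combination this
  have hc3 : l * fseq l a μ (p - 1) + μ = 0 := by
    rw [← fseq_succ, hp1, hfp]
  have hlast : ∀ i : Fin p, ¬((i : ℕ) + 1 < p) → (i : ℕ) = p - 1 := by
    intro i h; have := i.2; omega
  have hM : ∀ i : Fin p, (MmatC p).mulVec v i = l * v i + μ := by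
    intro i
    by_cases h : (i : ℕ) + 1 < p
    · rw [MmulVec v i h]
      show fseq l a μ ((i : ℕ) + 1) = l * fseq l a μ (i : ℕ) + μ
      exact fseq_succ l a μ _
    · rw [MmulVec_last v i h, hsum, zero_div]
      have hi := hlast i h
      show (0 : ℂ) = l * fseq l a μ (i : ℕ) + μ
      rw [hi, hc3]
  refine ⟨v, ?_, ?_⟩
  · intro h0
    have h0' : ∀ i : Fin p, v i = 0 := fun i => congrFun h0 i
    have ha : a = 0 := by
      have := h0' ⟨0, by omega⟩
      simpa [hv, fseq] using this
    have hμ0 : μ = 0 := by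
      have := h0' ⟨1, by omega⟩
      simp only [hv, fseq] at this
      simp only [ha] at this
      simpa using this
    rw [hμ] at hμ0
    exact (pow_ne_zero p hl) (neg_eq_zero.mp hμ0)
  · have hMsum : ∑ j, (MmatC p).mulVec v j = p * μ := by
      rw [Finset.sum_congr rfl (fun j _ => hM j), Finset.sum_add_distrib, ← Finset.mul_sum,
        hsum, mul_zero, zero_add, Finset.sum_const]
      simp [mul_comm]
    funext i
    rw [OmulVec, hM i, hMsum, Pi.smul_apply, smul_eq_mul]
    field_simp
    ring

/-- Forward: a nonzero eigenvalue of `O` is a root of `Σ (k+1) x^k`. -/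
lemma forward {p : ℕ} (hp : 2 ≤ p) (l : ℂ) (hl : l ≠ 0)
    (v : Fin p → ℂ) (hv : v ≠ 0) (heig : (DmatC p * MmatC p).mulVec v = l • v) :
    ∑ k ∈ range p, ((k : ℂ) + 1) * l ^ k = 0 := by
  have hpC : (p : ℂ) ≠ 0 := Nat.cast_ne_zero.2 (by omega)
  have hp1 : p - 1 + 1 = p := by omega
  set w : Fin p → ℂ := (MmatC p).mulVec v with hw
  set s : ℂ := ∑ j, w j with hs
  have heig' : ∀ i : Fin p, w i - s / p = l * v i := by
    intro i
    have := congrFun heig i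
    rw [OmulVec] at this
    simpa using this
  have hSv : ∑ j, v j = 0 := by
    have h1 : ∑ i : Fin p, (w i - s / p) = l * ∑ j, v j := by
      rw [Finset.sum_congr rfl (fun i _ => heig' i), ← Finset.mul_sum]
    rw [Finset.sum_sub_distrib, Finset.sum_const] at h1
    simp only [← hs, Finset.card_univ, Fintype.card_fin, nsmul_eq_mul] at h1
    have h2 : (p : ℂ) * (s / p) = s := by field_simp
    rw [h2, sub_self] at h1
    exact (mul_eq_zero.mp h1.symm).resolve_left hl
  set μ : ℂ := s / p with hμdef
  have h1 : ∀ i : Fin p, w i = l * v i + μ := by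
    intro i; linear_combination heig' i
  set a : ℂ := v ⟨0, by omega⟩ with hadef
  have hform : ∀ k, ∀ hk : k < p, v ⟨k, hk⟩ = fseq l a μ k := by
    intro k
    induction k with
    | zero => intro hk; simp [fseq, hadef]
    | succ n ih =>
      intro hk
      have hn : n < p := by omega
      have hrec : v ⟨n + 1, hk⟩ = l * v ⟨n, hn⟩ + μ := by
        have := h1 ⟨n, hn⟩
        rw [hw, MmulVec v ⟨n, hn⟩ hk] at this
        exact this
      rw [hrec, ih hn, fseq_succ]
  set T : ℂ := ∑ k ∈ range p, l ^ k with hT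
  set W : ℂ := ∑ i ∈ range p, ∑ j ∈ range i, l ^ j with hW
  have eq1 : a * T + μ * W = 0 := by
    have : ∑ j : Fin p, v j = ∑ n ∈ range p, fseq l a μ n := by
      rw [← Fin.sum_univ_eq_sum_range (fun n => fseq l a μ n) p]
      exact Finset.sum_congr rfl (fun i _ => hform i i.2)
    rw [this, fseq_sum] at hSv
    exact hSv
  have eq2 : l ^ p * a + μ * T = 0 := by
    have hlasti : w ⟨p - 1, by omega⟩ = (∑ j, v j) / p := by
      rw [hw]; exact MmulVec_last v _ (by simp; omega)
    have h0 : l * v ⟨p - 1, by omega⟩ + μ = 0 := by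
      have := h1 ⟨p - 1, by omega⟩
      rw [hlasti, hSv, zero_div] at this
      linear_combination -this
    rw [hform (p - 1) (by omega)] at h0
    have : l * fseq l a μ (p - 1) + μ = fseq l a μ p := by rw [← fseq_succ, hp1]
    rw [this] at h0
    simp only [fseq, ← hT] at h0
    linear_combination h0
  set E : ℂ := ∑ k ∈ range p, ((k : ℂ) + 1) * l ^ k with hE
  have hmaster : T ^ 2 = l ^ p * W + E := master p l
  by_contra hne
  have ha0 : a = 0 := by
    have : E * a = 0 := by linear_combination T * eq1 - W * eq2 - a * hmaster
    exact (mul_eq_zero.mp this).resolve_left hne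
  have hμ0 : μ = 0 := by
    have : E * μ = 0 := by
      linear_combination (-(l ^ p)) * eq1 + T * eq2 - μ * hmaster
    exact (mul_eq_zero.mp this).resolve_left hne
  apply hv
  funext i
  rw [show v i = v ⟨(i : ℕ), i.2⟩ from rfl, hform (i : ℕ) i.2]
  simp [fseq, ha0, hμ0]

/-- Eneström–Kakeya bound for our polynomial. -/
lemma EK {p : ℕ} (hp : 2 ≤ p) (l : ℂ)
    (hroot : ∑ k ∈ range p, ((k : ℂ) + 1) * l ^ k = 0) :
    ‖l‖ ≤ ((p : ℝ) - 1) / p := by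
  have hppos : (0 : ℝ) < p := by positivity
  set β : ℝ := ((p : ℝ) - 1) / p with hβdef
  have hβ : 0 < β := by
    apply div_pos _ hppos
    have : (2 : ℝ) ≤ p := by exact_mod_cast hp
    linarith
  by_contra habs
  push_neg at habs
  set w : ℂ := l / (β : ℂ) with hwdef
  have hβC : (β : ℂ) ≠ 0 := by exact_mod_cast hβ.ne'
  have hlw : l = (β : ℂ) * w := by rw [hwdef, mul_div_assoc', mul_div_cancel_left₀ _ hβC]
  have hr1 : 1 < ‖w‖ := by
    rw [hwdef, norm_div, Complex.norm_real, Real.norm_eq_abs, abs_of_pos hβ]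
    rw [lt_div_iff₀ hβ, one_mul]
    exact habs
  set r : ℝ := ‖w‖ with hrdef
  set c : ℕ → ℝ := fun k => ((k : ℝ) + 1) * β ^ k with hcdef
  have hcpos : ∀ k, 0 < c k := by
    intro k; apply mul_pos _ (pow_pos hβ k); positivity
  have hroot' : ∑ k ∈ range p, ((c k : ℝ) : ℂ) * w ^ k = 0 := by
    rw [← hroot]
    apply Finset.sum_congr rfl
    intro k _
    rw [hlw, mul_pow, hcdef]
    push_cast
    ring
  have hp1 : p - 1 + 1 = p := by omega
  -- key telescoping identity
  set S' : ℂ := ∑ k ∈ range (p - 1), ((c k : ℝ) : ℂ) * w ^ k with hS'def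
  have hsplit : ∑ k ∈ range p, ((c k : ℝ) : ℂ) * w ^ k
      = S' + ((c (p - 1) : ℝ) : ℂ) * w ^ (p - 1) := by
    have h := Finset.sum_range_succ (fun k => ((c k : ℝ) : ℂ) * w ^ k) (p - 1)
    rw [hp1] at h
    exact h
  have hS' : S' = -((c (p - 1) : ℝ) : ℂ) * w ^ (p - 1) := by
    rw [hroot'] at hsplit
    linear_combination -hsplit
  have hA : ∑ k ∈ range (p - 1), ((c (k + 1) : ℝ) : ℂ) * w ^ (k + 1)
      = (∑ k ∈ range p, ((c k : ℝ) : ℂ) * w ^ k) - ((c 0 : ℝ) : ℂ) := by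
    have h := Finset.sum_range_succ' (fun k => ((c k : ℝ) : ℂ) * w ^ k) (p - 1)
    rw [hp1] at h
    rw [h]
    simp
  have key : ((c (p - 1) : ℝ) : ℂ) * w ^ p
      = ((c 0 : ℝ) : ℂ)
        + ∑ k ∈ range (p - 1), (((c (k + 1) - c k : ℝ)) : ℂ) * w ^ (k + 1) := by
    have expand : ∑ k ∈ range (p - 1), (((c (k + 1) - c k : ℝ)) : ℂ) * w ^ (k + 1)
        = (∑ k ∈ range (p - 1), ((c (k + 1) : ℝ) : ℂ) * w ^ (k + 1))
          - w * S' := by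
      rw [hS'def, Finset.mul_sum, ← Finset.sum_sub_distrib]
      apply Finset.sum_congr rfl
      intro k _
      push_cast
      ring
    have hwp : w * w ^ (p - 1) = w ^ p := by
      rw [← pow_succ', hp1]
    rw [expand, hA, hroot', hS']
    linear_combination (-((c (p - 1) : ℝ) : ℂ)) * hwp
  -- monotonicity of c
  have cmono : ∀ k, k < p - 1 → c k ≤ c (k + 1) := by
    intro k hk
    have hk2 : (k : ℝ) + 2 ≤ p := by
      have : k + 2 ≤ p := by omega
      exact_mod_cast this
    have h1 : ((k : ℝ) + 1) ≤ ((k : ℝ) + 2) * β := by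
      rw [hβdef, mul_div_assoc', le_div_iff₀ hppos]
      nlinarith
    have h2 : c (k + 1) = (((k : ℝ) + 2) * β) * β ^ k := by
      rw [hcdef]; push_cast; ring
    rw [h2, hcdef]
    exact mul_le_mul_of_nonneg_right h1 (pow_pos hβ k).le
  have hr0 : (0 : ℝ) < r := lt_trans one_pos hr1
  -- take absolute values
  have habs1 : c (p - 1) * r ^ p
      ≤ c 0 + ∑ k ∈ range (p - 1), (c (k + 1) - c k) * r ^ (k + 1) := by
    have lhs_eq : ‖((c (p - 1) : ℝ) : ℂ) * w ^ p‖ = c (p - 1) * r ^ p := by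
      rw [norm_mul, norm_pow, Complex.norm_real, Real.norm_eq_abs, abs_of_pos (hcpos _), hrdef]
    calc c (p - 1) * r ^ p
        = ‖((c (p - 1) : ℝ) : ℂ) * w ^ p‖ := lhs_eq.symm
      _ = ‖((c 0 : ℝ) : ℂ)
            + ∑ k ∈ range (p - 1), (((c (k + 1) - c k : ℝ)) : ℂ) * w ^ (k + 1)‖ := by
          rw [key]
      _ ≤ ‖((c 0 : ℝ) : ℂ)‖
            + ‖∑ k ∈ range (p - 1), (((c (k + 1) - c k : ℝ)) : ℂ) * w ^ (k + 1)‖ :=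
          norm_add_le _ _
      _ ≤ c 0 + ∑ k ∈ range (p - 1), (c (k + 1) - c k) * r ^ (k + 1) := by
          gcongr
          · rw [Complex.norm_real, Real.norm_eq_abs, abs_of_pos (hcpos 0)]
          · calc ‖∑ k ∈ range (p - 1), (((c (k + 1) - c k : ℝ)) : ℂ) * w ^ (k + 1)‖
                ≤ ∑ k ∈ range (p - 1),
                    ‖(((c (k + 1) - c k : ℝ)) : ℂ) * w ^ (k + 1)‖ :=
                  norm_sum_le _ _
              _ = ∑ k ∈ range (p - 1), (c (k + 1) - c k) * r ^ (k + 1) := by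
                  apply Finset.sum_congr rfl
                  intro k hk
                  rw [norm_mul, norm_pow, Complex.norm_real, Real.norm_eq_abs,
                    abs_of_nonneg (sub_nonneg.mpr (cmono k (Finset.mem_range.mp hk))), hrdef]
  have hrge1 : (1 : ℝ) ≤ r := hr1.le
  have habs2 : c 0 + ∑ k ∈ range (p - 1), (c (k + 1) - c k) * r ^ (k + 1)
      ≤ c (p - 1) * r ^ (p - 1) := by
    have step1 : c 0 ≤ c 0 * r ^ (p - 1) := by
      nlinarith [hcpos 0, one_le_pow₀ (n := p - 1) hrge1]
    have step2 : ∑ k ∈ range (p - 1), (c (k + 1) - c k) * r ^ (k + 1)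
        ≤ ∑ k ∈ range (p - 1), (c (k + 1) - c k) * r ^ (p - 1) := by
      apply Finset.sum_le_sum
      intro k hk
      have hkp : k + 1 ≤ p - 1 := by
        have := Finset.mem_range.mp hk; omega
      exact mul_le_mul_of_nonneg_left (pow_le_pow_right₀ hrge1 hkp)
        (sub_nonneg.mpr (cmono k (Finset.mem_range.mp hk)))
    have tele : ∑ k ∈ range (p - 1), (c (k + 1) - c k) = c (p - 1) - c 0 :=
      Finset.sum_range_sub c (p - 1)
    calc c 0 + ∑ k ∈ range (p - 1), (c (k + 1) - c k) * r ^ (k + 1)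
        ≤ c 0 * r ^ (p - 1) + ∑ k ∈ range (p - 1), (c (k + 1) - c k) * r ^ (p - 1) := by
          exact add_le_add step1 step2
      _ = (c 0 + (c (p - 1) - c 0)) * r ^ (p - 1) := by
          rw [← Finset.sum_mul, tele]; ring
      _ = c (p - 1) * r ^ (p - 1) := by ring
  have hfinal : c (p - 1) * r ^ p ≤ c (p - 1) * r ^ (p - 1) := le_trans habs1 habs2
  have hrp : r ^ p = r ^ (p - 1) * r := by
    rw [← pow_succ, hp1]
  rw [hrp] at hfinal
  have hApos : 0 < c (p - 1) * r ^ (p - 1) := mul_pos (hcpos _) (pow_pos hr0 _)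
  have hmul := mul_pos hApos (sub_pos.mpr hr1)
  nlinarith [hfinal, hmul]

lemma Epoly_zero {p : ℕ} (hp : 2 ≤ p) :
    ∑ k ∈ range p, ((k : ℂ) + 1) * (0 : ℂ) ^ k = 1 := by
  rw [Finset.sum_eq_single_of_mem 0 (Finset.mem_range.mpr (by omega))
    (fun k _ hk => by simp [zero_pow hk])]
  simp

lemma root_iff {p : ℕ} (hp : 2 ≤ p) (l : ℂ) :
    (RpolyC p).IsRoot l ↔ ∑ k ∈ range p, ((k : ℂ) + 1) * l ^ k = 0 := by
  have hpC : (p : ℂ) ≠ 0 := Nat.cast_ne_zero.2 (by omega)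
  simp only [RpolyC, IsRoot, eval_finset_sum, eval_mul, eval_C, eval_pow, eval_X]
  rw [show ∑ k ∈ range p, ((k : ℂ) + 1) / p * l ^ k
      = (∑ k ∈ range p, ((k : ℂ) + 1) * l ^ k) / p from by
    rw [Finset.sum_div]; exact Finset.sum_congr rfl fun k _ => by ring]
  rw [_root_.div_eq_zero_iff]
  simp [hpC]

lemma zero_mem {p : ℕ} (hp : 2 ≤ p) : (0 : ℂ) ∈ spectrum ℂ (DmatC p * MmatC p) := by
  have hpC : (p : ℂ) ≠ 0 := Nat.cast_ne_zero.2 (by omega)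
  rw [spec_iff]
  refine ⟨fun _ => 1, ?_, ?_⟩
  · intro h
    have := congrFun h ⟨0, by omega⟩
    simp at this
  · have hM1 : (MmatC p).mulVec (fun _ => 1) = fun _ => (1 : ℂ) := by
      funext i
      by_cases h : (i : ℕ) + 1 < p
      · rw [MmulVec _ i h]
      · rw [MmulVec_last _ i h, Finset.sum_const, Finset.card_univ, Fintype.card_fin]
        simp [div_self hpC]
    funext i
    rw [OmulVec, hM1]
    simp [Finset.sum_const, Finset.card_univ, div_self hpC]

end EigDM

/-- The eigenvalues of `O = D·M` are exactly `0` together with the roots of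
`R`; in particular every eigenvalue has modulus at most `(p-1)/p < 1`. -/
theorem eigenvalues_DM (p : ℕ) (hp : 2 ≤ p) :
    spectrum ℂ (DmatC p * MmatC p) = {0} ∪ { l : ℂ | (RpolyC p).IsRoot l } ∧
    (∀ l : ℂ, l ∈ spectrum ℂ (DmatC p * MmatC p) →
      ‖l‖ ≤ ((p : ℝ) - 1) / p) ∧
    ((p : ℝ) - 1) / p < 1 := by
  have h2 : (2 : ℝ) ≤ p := by exact_mod_cast hp
  have hset : spectrum ℂ (DmatC p * MmatC p) = {0} ∪ { l : ℂ | (RpolyC p).IsRoot l } := by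
    ext l
    simp only [Set.mem_union, Set.mem_singleton_iff, Set.mem_setOf_eq]
    constructor
    · intro h
      rcases eq_or_ne l 0 with h0 | h0
      · exact Or.inl h0
      · obtain ⟨v, hv, heig⟩ := (EigDM.spec_iff _ l).mp h
        exact Or.inr ((EigDM.root_iff hp l).mpr (EigDM.forward hp l h0 v hv heig))
    · rintro (rfl | h)
      · exact EigDM.zero_mem hp
      · have hE := (EigDM.root_iff hp l).mp h
        have hl0 : l ≠ 0 := by
          rintro rfl
          rw [EigDM.Epoly_zero hp] at hE
          exact one_ne_zero hE
        exact (EigDM.spec_iff _ l).mpr (EigDM.backward hp l hl0 hE)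
  refine ⟨hset, ?_, ?_⟩
  · intro l hl
    rw [hset] at hl
    rcases hl with h0 | h
    · rw [Set.mem_singleton_iff] at h0
      subst h0
      simp only [norm_zero]
      apply div_nonneg <;> linarith
    · exact EigDM.EK hp l ((EigDM.root_iff hp l).mp h)
  · rw [div_lt_one (by linarith)]
    linarith
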